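/- Let R : Finset α be a relation with treatment indicator T : α → Bool, covariate map X_R : α → β, and key K_R : α → κ; let S : Finset γ be a relation with key K_S : γ → κ and covariate map X_S : γ → δ. Let the join R ⋈ S be the Finset of pairs (r, s) ∈ R ×ˢ S with K_R r = K_S s, with treatment (r,s) ↦ T r and covariates (r,s) ↦ (X_R r, X_S s). Then coarsened exact matching commutes with the join: CEM_{T∘fst, (X_R∘fst, X_S∘snd)}(R ⋈ S) = CEM_{T∘fst, (X_R∘fst, X_S∘snd)}( CEM_{T, X_R}(R) ⋈ S ), i.e., performing CEM on the join of the two relations gives the same result as first performing CEM on the base relation containing the treatment (with respect to its own covariates) and then performing CEM on the join of the result with the second relation. -/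

import Mathlib

open Classical in
/-- Coarsened exact matching: `CEM T X R` retains the units `r ∈ R` whose group
`{r' ∈ R : X r' = X r}` contains at least one treated unit and at least one control unit. -/
noncomputable def CEM {α β : Type*} (T : α → Bool) (X : α → β) (R : Finset α) : Finset α :=
  R.filter (fun r =>
    (∃ r' ∈ R, X r' = X r ∧ T r' = true) ∧ (∃ r' ∈ R, X r' = X r ∧ T r' = false))

open Classical in
/-- The key/foreign-key join of two relations. -/
noncomputable def joinRel {α γ κ : Type*} (R : Finset α) (S : Finset γ)
    (K_R : α → κ) (K_S : γ → κ) : Finset (α × γ) :=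
  (R ×ˢ S).filter (fun p => K_R p.1 = K_S p.2)

/-- Coarsened exact matching can be pushed down to the base relations of a normalized
database: performing CEM on the join `R ⋈ S` equals first performing CEM on the base
relation `R` containing the treatment (with respect to its own covariates `X_R`) and then
performing CEM on the join of the result with `S`. -/
theorem cem_pushdown
    {α γ κ β δ : Type*}
    (R : Finset α) (T : α → Bool) (X_R : α → β) (K_R : α → κ)
    (S : Finset γ) (K_S : γ → κ) (X_S : γ → δ) :
    CEM (fun p => T p.1) (fun p => (X_R p.1, X_S p.2)) (joinRel R S K_R K_S) =
      CEM (fun p => T p.1) (fun p => (X_R p.1, X_S p.2))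
        (joinRel (CEM T X_R R) S K_R K_S) := by
  ext p
  obtain ⟨r, s⟩ := p
  unfold CEM joinRel
  simp only [Finset.mem_filter, Finset.mem_product, Prod.mk.injEq, Prod.exists]
  constructor
  · rintro ⟨⟨⟨hr, hs⟩, hk⟩, ⟨a, b, ⟨⟨ha, hb⟩, hab⟩, ⟨hXa, hXb⟩, hTa⟩,
      ⟨c, d, ⟨⟨hc, hd⟩, hcd⟩, ⟨hXc, hXd⟩, hTc⟩⟩
    exact ⟨⟨⟨⟨hr, ⟨a, ha, hXa, hTa⟩, ⟨c, hc, hXc, hTc⟩⟩, hs⟩, hk⟩,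
      ⟨a, b, ⟨⟨⟨ha, ⟨a, ha, rfl, hTa⟩, ⟨c, hc, hXc.trans hXa.symm, hTc⟩⟩, hb⟩, hab⟩,
        ⟨hXa, hXb⟩, hTa⟩,
      ⟨c, d, ⟨⟨⟨hc, ⟨a, ha, hXa.trans hXc.symm, hTa⟩, ⟨c, hc, rfl, hTc⟩⟩, hd⟩, hcd⟩,
        ⟨hXc, hXd⟩, hTc⟩⟩
  · rintro ⟨⟨⟨⟨hr, -, -⟩, hs⟩, hk⟩, ⟨a, b, ⟨⟨⟨ha, -, -⟩, hb⟩, hab⟩, hX, hTa⟩,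
      ⟨c, d, ⟨⟨⟨hc, -, -⟩, hd⟩, hcd⟩, hX', hTc⟩⟩
    exact ⟨⟨⟨hr, hs⟩, hk⟩, ⟨a, b, ⟨⟨ha, hb⟩, hab⟩, hX, hTa⟩,
      ⟨c, d, ⟨⟨hc, hd⟩, hcd⟩, hX', hTc⟩⟩
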